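/- Let ABC be a projective triangle with polar triangle A'B'C' with respect to a conic Φ. Define the double triangle with sides a'' = A₀A, b'' = B₀B, c'' = C₀C, where A₀ = a·a', B₀ = b·b', C₀ = c·c'. Then the pseudomedians AA'', BB'', CC'' (joining each vertex of ABC to the opposite vertex of the double triangle) are concurrent. -/

import Mathlib

open Matrix

/-- Points (and, dually, lines) of the real projective plane are represented by
nonzero vectors of `ℝ³`; `dot3` is the incidence pairing. -/
def dot3 (u v : Fin 3 → ℝ) : ℝ := u 0 * v 0 + u 1 * v 1 + u 2 * v 2

/-- The (projective points represented by) three vectors are collinear: some nonzero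
line form vanishes on all of them. -/
def Coll (a b c : Fin 3 → ℝ) : Prop :=
  ∃ l : Fin 3 → ℝ, l ≠ 0 ∧ dot3 l a = 0 ∧ dot3 l b = 0 ∧ dot3 l c = 0

/-- `CRv a b c d k`: the cross ratio `(abcd)` of four collinear projective points
(represented by the given vectors) equals `k`.  Writing `c = x•a + y•b` and
`d = z•a + w•b`, the cross ratio is `(y/x)/(w/z) = (y*z)/(x*w)`; this value is
independent of the chosen representative vectors. -/
def CRv (a b c d : Fin 3 → ℝ) (k : ℝ) : Prop :=
  ∃ x y z w : ℝ, c = x • a + y • b ∧ d = z • a + w • b ∧ x * w ≠ 0 ∧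
    k = (y * z) / (x * w)

/-! ### Auxiliary machinery -/

/-- The conic pairing. -/
def fM (M : Matrix (Fin 3) (Fin 3) ℝ) (X Y : Fin 3 → ℝ) : ℝ := dot3 X (M.mulVec Y)

lemma fM_symm (M : Matrix (Fin 3) (Fin 3) ℝ) (hsymm : M.IsSymm) (X Y : Fin 3 → ℝ) :
    fM M X Y = fM M Y X := by
  have h := fun i j => hsymm.apply i j
  simp only [fM, dot3, Matrix.mulVec, dotProduct, Fin.sum_univ_three]
  rw [h 0 1, h 0 2, h 1 2, h 1 0, h 2 0, h 2 1]
  ring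

lemma fM_lin_left (M : Matrix (Fin 3) (Fin 3) ℝ) (x y : ℝ) (u v w : Fin 3 → ℝ) :
    fM M (x • u + y • v) w = x * fM M u w + y * fM M v w := by
  simp only [fM, dot3, Pi.add_apply, Pi.smul_apply, smul_eq_mul]
  ring

lemma dot3_lin (l u v : Fin 3 → ℝ) (x y : ℝ) :
    dot3 l (x • u + y • v) = x * dot3 l u + y * dot3 l v := by
  simp only [dot3, Pi.add_apply, Pi.smul_apply, smul_eq_mul]; ring

lemma dot3_smul (l u : Fin 3 → ℝ) (x : ℝ) :
    dot3 l (x • u) = x * dot3 l u := by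
  simp only [dot3, Pi.smul_apply, smul_eq_mul]; ring

/-- cross product -/
def cp (u v : Fin 3 → ℝ) : Fin 3 → ℝ :=
  ![u 1 * v 2 - u 2 * v 1, u 2 * v 0 - u 0 * v 2, u 0 * v 1 - u 1 * v 0]

lemma dot3_cp_left (u v : Fin 3 → ℝ) : dot3 (cp u v) u = 0 := by
  simp [dot3, cp]; ring

lemma dot3_cp_right (u v : Fin 3 → ℝ) : dot3 (cp u v) v = 0 := by
  simp [dot3, cp]; ring

lemma cp_ne_zero (u v : Fin 3 → ℝ) (hu : u ≠ 0) (hv : ∀ t : ℝ, v ≠ t • u) :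
    cp u v ≠ 0 := by
  intro h
  have e0 : u 1 * v 2 - u 2 * v 1 = 0 := by
    have := congrFun h 0; simpa [cp] using this
  have e1 : u 2 * v 0 - u 0 * v 2 = 0 := by
    have := congrFun h 1; simpa [cp] using this
  have e2 : u 0 * v 1 - u 1 * v 0 = 0 := by
    have := congrFun h 2; simpa [cp] using this
  have hex : ∃ i, u i ≠ 0 := by
    by_contra hc; push_neg at hc; exact hu (funext hc)
  obtain ⟨i, hi⟩ := hex
  fin_cases i
  · have h0 : u 0 ≠ 0 := hi
    apply hv (v 0 / u 0)
    funext j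
    simp only [Pi.smul_apply, smul_eq_mul]
    fin_cases j
    · show v 0 = v 0 / u 0 * u 0
      field_simp
    · show v 1 = v 0 / u 0 * u 1
      rw [div_mul_eq_mul_div, eq_div_iff h0]; linarith
    · show v 2 = v 0 / u 0 * u 2
      rw [div_mul_eq_mul_div, eq_div_iff h0]; linarith
  · have h0 : u 1 ≠ 0 := hi
    apply hv (v 1 / u 1)
    funext j
    simp only [Pi.smul_apply, smul_eq_mul]
    fin_cases j
    · show v 0 = v 1 / u 1 * u 0
      rw [div_mul_eq_mul_div, eq_div_iff h0]; linarith
    · show v 1 = v 1 / u 1 * u 1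
      field_simp
    · show v 2 = v 1 / u 1 * u 2
      rw [div_mul_eq_mul_div, eq_div_iff h0]; linarith
  · have h0 : u 2 ≠ 0 := hi
    apply hv (v 2 / u 2)
    funext j
    simp only [Pi.smul_apply, smul_eq_mul]
    fin_cases j
    · show v 0 = v 2 / u 2 * u 0
      rw [div_mul_eq_mul_div, eq_div_iff h0]; linarith
    · show v 1 = v 2 / u 2 * u 1
      rw [div_mul_eq_mul_div, eq_div_iff h0]; linarith
    · show v 2 = v 2 / u 2 * u 2
      field_simp

/-- dependence of three vectors gives a common annihilating line. -/
lemma coll_of_dep (U V X : Fin 3 → ℝ) (c0 c1 c2 : ℝ) (hc : ¬(c0 = 0 ∧ c1 = 0 ∧ c2 = 0))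
    (h : c0 • U + c1 • V + c2 • X = 0) : Coll U V X := by
  set NM : Matrix (Fin 3) (Fin 3) ℝ := Matrix.of ![U, V, X] with hNM
  have hdet : NM.det = 0 := by
    rw [← Matrix.exists_vecMul_eq_zero_iff]
    refine ⟨![c0, c1, c2], ?_, ?_⟩
    · intro hz
      exact hc ⟨congrFun hz 0, congrFun hz 1, congrFun hz 2⟩
    · funext j
      have := congrFun h j
      simp only [Pi.add_apply, Pi.smul_apply, smul_eq_mul, Pi.zero_apply] at this
      simp [Matrix.vecMul, dotProduct, Fin.sum_univ_three, hNM]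
      linarith
  obtain ⟨l, hl0, hl⟩ := Matrix.exists_mulVec_eq_zero_iff.mpr hdet
  refine ⟨l, hl0, ?_, ?_, ?_⟩
  · have := congrFun hl 0
    simp [Matrix.mulVec, dotProduct, Fin.sum_univ_three, hNM] at this
    simp [dot3]; linarith
  · have := congrFun hl 1
    simp [Matrix.mulVec, dotProduct, Fin.sum_univ_three, hNM] at this
    simp [dot3]; linarith
  · have := congrFun hl 2
    simp [Matrix.mulVec, dotProduct, Fin.sum_univ_three, hNM] at this
    simp [dot3]; linarith

/-- From non-collinearity: coefficient uniqueness (linear independence). -/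
lemma indep3 (A B C : Fin 3 → ℝ) (h : ¬Coll A B C) :
    ∀ x y z : ℝ, x • A + y • B + z • C = 0 → x = 0 ∧ y = 0 ∧ z = 0 := by
  intro x y z hxyz
  by_contra hc
  exact h (coll_of_dep A B C x y z hc hxyz)

/-- A point collinear with two independent points is in their span. -/
lemma coll_span (U V X : Fin 3 → ℝ)
    (hUV : ∀ x y : ℝ, x • U + y • V = 0 → x = 0 ∧ y = 0)
    (h : Coll U V X) : ∃ x y : ℝ, X = x • U + y • V := by
  obtain ⟨l, hl0, h1, h2, h3⟩ := h
  set NM : Matrix (Fin 3) (Fin 3) ℝ := Matrix.of ![U, V, X] with hNM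
  have hdet : NM.det = 0 := by
    rw [← Matrix.exists_mulVec_eq_zero_iff]
    refine ⟨l, hl0, ?_⟩
    funext j
    fin_cases j <;>
      simp [Matrix.mulVec, dotProduct, Fin.sum_univ_three, hNM] <;>
      [(simp [dot3] at h1; linarith); (simp [dot3] at h2; linarith);
       (simp [dot3] at h3; linarith)]
  obtain ⟨c, hc0, hc⟩ := Matrix.exists_vecMul_eq_zero_iff.mpr hdet
  have hcomb : c 0 • U + c 1 • V + c 2 • X = 0 := by
    funext j
    have := congrFun hc j
    simp [Matrix.vecMul, dotProduct, Fin.sum_univ_three, hNM] at this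
    simp only [Pi.add_apply, Pi.smul_apply, smul_eq_mul, Pi.zero_apply]
    linarith
  have hc2 : c 2 ≠ 0 := by
    intro h2z
    rw [h2z, zero_smul, add_zero] at hcomb
    obtain ⟨h0, h1'⟩ := hUV _ _ hcomb
    apply hc0
    funext j; fin_cases j <;> simp [h0, h1', h2z]
  refine ⟨-(c 0) / c 2, -(c 1) / c 2, ?_⟩
  have hX : c 2 • X = (-(c 0)) • U + (-(c 1)) • V := by
    rw [neg_smul, neg_smul]
    funext j
    have hj := congrFun hcomb j
    simp only [Pi.add_apply, Pi.smul_apply, Pi.neg_apply, smul_eq_mul,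
      Pi.zero_apply] at hj ⊢
    linarith
  funext j
  have hj := congrFun hX j
  simp only [Pi.add_apply, Pi.smul_apply, Pi.neg_apply, smul_eq_mul, Pi.zero_apply] at hj ⊢
  field_simp
  linear_combination hj

/-- If three points all lie on the span of two independent vectors, they are collinear. -/
lemma coll_of_span2 (B C X Y Z : Fin 3 → ℝ)
    (hBC : ∀ x y : ℝ, x • B + y • C = 0 → x = 0 ∧ y = 0)
    (hX : ∃ x y : ℝ, X = x • B + y • C) (hY : ∃ x y : ℝ, Y = x • B + y • C)
    (hZ : ∃ x y : ℝ, Z = x • B + y • C) : Coll X Y Z := by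
  have hBne : B ≠ 0 := by
    intro h
    have := (hBC 1 0 (by rw [h, smul_zero, zero_smul, add_zero])).1
    norm_num at this
  have hCB : ∀ t : ℝ, C ≠ t • B := by
    intro t h
    have := (hBC t (-1) (by rw [h, neg_one_smul, add_neg_cancel])).2
    norm_num at this
  obtain ⟨x1, y1, rfl⟩ := hX
  obtain ⟨x2, y2, rfl⟩ := hY
  obtain ⟨x3, y3, rfl⟩ := hZ
  refine ⟨cp B C, cp_ne_zero B C hBne hCB, ?_, ?_, ?_⟩ <;>
    rw [dot3_lin, dot3_cp_left, dot3_cp_right] <;> ring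

/-- Key nondegeneracy: under the general position hypotheses, `f(B,C) ≠ 0`. -/
lemma p_nonzero (M : Matrix (Fin 3) (Fin 3) ℝ) (hsymm : M.IsSymm)
    (A B C B0 C0 A'' B'' C'' : Fin 3 → ℝ)
    (hind : ∀ x y z : ℝ, x • A + y • B + z • C = 0 → x = 0 ∧ y = 0 ∧ z = 0)
    (hpolB : ¬(fM M C B = 0 ∧ fM M A B = 0))
    (hpolC : ¬(fM M A C = 0 ∧ fM M B C = 0))
    (hB0 : B0 ≠ 0) (hB0a : Coll C A B0) (hB0b : fM M B0 B = 0)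
    (hC0 : C0 ≠ 0) (hC0a : Coll A B C0) (hC0b : fM M C0 C = 0)
    (hA''1 : Coll B0 B A'') (hB''1 : Coll C0 C B'') (hC''2 : Coll B0 B C'')
    (hT'' : ¬Coll A'' B'' C'') :
    fM M B C ≠ 0 := by
  intro hp
  have hr : fM M A B ≠ 0 := fun h => hpolB ⟨by rw [fM_symm M hsymm]; exact hp, h⟩
  have hq : fM M A C ≠ 0 := fun h => hpolC ⟨h, hp⟩
  -- pair independences
  have hCA : ∀ x y : ℝ, x • C + y • A = 0 → x = 0 ∧ y = 0 := by
    intro x y h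
    have h' : y • A + (0 : ℝ) • B + x • C = 0 := by
      funext j; have hj := congrFun h j
      simp only [Pi.add_apply, Pi.smul_apply, smul_eq_mul, Pi.zero_apply] at hj ⊢
      linear_combination hj
    obtain ⟨hy, _, hx⟩ := hind y 0 x h'
    exact ⟨hx, hy⟩
  have hAB : ∀ x y : ℝ, x • A + y • B = 0 → x = 0 ∧ y = 0 := by
    intro x y h
    have h' : x • A + y • B + (0 : ℝ) • C = 0 := by
      funext j; have hj := congrFun h j
      simp only [Pi.add_apply, Pi.smul_apply, smul_eq_mul, Pi.zero_apply] at hj ⊢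
      linear_combination hj
    obtain ⟨hx, hy, _⟩ := hind x y 0 h'
    exact ⟨hx, hy⟩
  have hBC : ∀ x y : ℝ, x • B + y • C = 0 → x = 0 ∧ y = 0 := by
    intro x y h
    have h' : (0 : ℝ) • A + x • B + y • C = 0 := by
      funext j; have hj := congrFun h j
      simp only [Pi.add_apply, Pi.smul_apply, smul_eq_mul, Pi.zero_apply] at hj ⊢
      linear_combination hj
    obtain ⟨_, hx, hy⟩ := hind 0 x y h'
    exact ⟨hx, hy⟩
  -- B0 is a multiple of C
  obtain ⟨z, x, hB0e⟩ := coll_span C A B0 hCA hB0a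
  have hrel1 : z * fM M C B + x * fM M A B = 0 := by
    have h := hB0b; rw [hB0e, fM_lin_left] at h; exact h
  rw [fM_symm M hsymm C B, hp, mul_zero, zero_add] at hrel1
  have hx0 : x = 0 := by
    rcases mul_eq_zero.mp hrel1 with h | h
    · exact h
    · exact absurd h hr
  have hB0z : B0 = z • C := by rw [hB0e, hx0, zero_smul, add_zero]
  have hz : z ≠ 0 := by
    intro h; exact hB0 (by rw [hB0z, h, zero_smul])
  -- C0 is a multiple of B
  obtain ⟨aa, bb, hC0e⟩ := coll_span A B C0 hAB hC0a
  have hrel2 : aa * fM M A C + bb * fM M B C = 0 := by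
    have h := hC0b; rw [hC0e, fM_lin_left] at h; exact h
  rw [hp, mul_zero, add_zero] at hrel2
  have haa0 : aa = 0 := by
    rcases mul_eq_zero.mp hrel2 with h | h
    · exact h
    · exact absurd h hq
  have hC0b' : C0 = bb • B := by rw [hC0e, haa0, zero_smul, zero_add]
  have hbb : bb ≠ 0 := by
    intro h; exact hC0 (by rw [hC0b', h, zero_smul])
  -- B0, B independent
  have hB0B : ∀ s t : ℝ, s • B0 + t • B = 0 → s = 0 ∧ t = 0 := by
    intro s t h
    rw [hB0z, smul_smul] at h
    have h' : (0 : ℝ) • A + t • B + (s * z) • C = 0 := by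
      funext j; have hj := congrFun h j
      simp only [Pi.add_apply, Pi.smul_apply, smul_eq_mul, Pi.zero_apply] at hj ⊢
      linear_combination hj
    obtain ⟨_, ht, hsz⟩ := hind 0 t (s * z) h'
    refine ⟨?_, ht⟩
    rcases mul_eq_zero.mp hsz with h | h
    · exact h
    · exact absurd h hz
  -- C0, C independent
  have hC0C : ∀ s t : ℝ, s • C0 + t • C = 0 → s = 0 ∧ t = 0 := by
    intro s t h
    rw [hC0b', smul_smul] at h
    have h' : (0 : ℝ) • A + (s * bb) • B + t • C = 0 := by
      funext j; have hj := congrFun h j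
      simp only [Pi.add_apply, Pi.smul_apply, smul_eq_mul, Pi.zero_apply] at hj ⊢
      linear_combination hj
    obtain ⟨_, hsb, ht⟩ := hind 0 (s * bb) t h'
    refine ⟨?_, ht⟩
    rcases mul_eq_zero.mp hsb with h | h
    · exact h
    · exact absurd h hbb
  obtain ⟨u, v, hA''e⟩ := coll_span B0 B A'' hB0B hA''1
  obtain ⟨u', v', hB''e⟩ := coll_span C0 C B'' hC0C hB''1
  obtain ⟨u'', v'', hC''e⟩ := coll_span B0 B C'' hB0B hC''2
  apply hT''
  apply coll_of_span2 B C A'' B'' C'' hBC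
  · refine ⟨v, u * z, ?_⟩
    funext j
    have hj := congrFun hA''e j
    have hb := congrFun hB0z j
    simp only [Pi.add_apply, Pi.smul_apply, smul_eq_mul, Pi.zero_apply] at hj hb ⊢
    linear_combination hj + u * hb
  · refine ⟨u' * bb, v', ?_⟩
    funext j
    have hj := congrFun hB''e j
    have hb := congrFun hC0b' j
    simp only [Pi.add_apply, Pi.smul_apply, smul_eq_mul, Pi.zero_apply] at hj hb ⊢
    linear_combination hj + u' * hb
  · refine ⟨v'', u'' * z, ?_⟩
    funext j
    have hj := congrFun hC''e j
    have hb := congrFun hB0z j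
    simp only [Pi.add_apply, Pi.smul_apply, smul_eq_mul, Pi.zero_apply] at hj hb ⊢
    linear_combination hj + u'' * hb

/-- The pseudomedian through `A` passes through `N = pA + qB + rC`. -/
lemma vertex (M : Matrix (Fin 3) (Fin 3) ℝ) (hsymm : M.IsSymm)
    (A B C B0 C0 A'' N : Fin 3 → ℝ)
    (hind : ∀ x y z : ℝ, x • A + y • B + z • C = 0 → x = 0 ∧ y = 0 ∧ z = 0)
    (hp : fM M B C ≠ 0) (hq : fM M C A ≠ 0) (hr : fM M A B ≠ 0)
    (hB0 : B0 ≠ 0) (hB0a : Coll C A B0) (hB0b : fM M B0 B = 0)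
    (hC0 : C0 ≠ 0) (hC0a : Coll A B C0) (hC0b : fM M C0 C = 0)
    (hA''0 : A'' ≠ 0) (hA''1 : Coll B0 B A'') (hA''2 : Coll C0 C A'')
    (hAA'' : ∀ t : ℝ, A'' ≠ t • A)
    (hN : N = fM M B C • A + fM M C A • B + fM M A B • C) :
    Coll A A'' N := by
  have hAne : A ≠ 0 := by
    intro h
    have := (hind 1 0 0 (by rw [h]; simp)).1
    norm_num at this
  have hCA : ∀ x y : ℝ, x • C + y • A = 0 → x = 0 ∧ y = 0 := by
    intro x y h
    have h' : y • A + (0 : ℝ) • B + x • C = 0 := by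
      funext j; have hj := congrFun h j
      simp only [Pi.add_apply, Pi.smul_apply, smul_eq_mul, Pi.zero_apply] at hj ⊢
      linear_combination hj
    obtain ⟨hy, _, hx⟩ := hind y 0 x h'
    exact ⟨hx, hy⟩
  have hAB : ∀ x y : ℝ, x • A + y • B = 0 → x = 0 ∧ y = 0 := by
    intro x y h
    have h' : x • A + y • B + (0 : ℝ) • C = 0 := by
      funext j; have hj := congrFun h j
      simp only [Pi.add_apply, Pi.smul_apply, smul_eq_mul, Pi.zero_apply] at hj ⊢
      linear_combination hj
    obtain ⟨hx, hy, _⟩ := hind x y 0 h'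
    exact ⟨hx, hy⟩
  -- decompose B0 and C0
  obtain ⟨z, x, hB0e⟩ := coll_span C A B0 hCA hB0a
  have hrel1 : z * fM M C B + x * fM M A B = 0 := by
    have h := hB0b; rw [hB0e, fM_lin_left] at h; exact h
  rw [fM_symm M hsymm C B] at hrel1
  have hx : x ≠ 0 := by
    intro h0
    rw [h0, zero_mul, add_zero, mul_eq_zero] at hrel1
    rcases hrel1 with h | h
    · exact hB0 (by rw [hB0e, h0, h, zero_smul, zero_smul, add_zero])
    · exact hp h
  have hz : z ≠ 0 := by
    intro h0
    rw [h0, zero_mul, zero_add, mul_eq_zero] at hrel1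
    rcases hrel1 with h | h
    · exact hx h
    · exact hr h
  obtain ⟨aa, bb, hC0e⟩ := coll_span A B C0 hAB hC0a
  have hrel2 : aa * fM M A C + bb * fM M B C = 0 := by
    have h := hC0b; rw [hC0e, fM_lin_left] at h; exact h
  rw [fM_symm M hsymm A C] at hrel2
  have haa : aa ≠ 0 := by
    intro h0
    rw [h0, zero_mul, zero_add, mul_eq_zero] at hrel2
    rcases hrel2 with h | h
    · exact hC0 (by rw [hC0e, h0, h, zero_smul, zero_smul, add_zero])
    · exact hp h
  have hbb : bb ≠ 0 := by
    intro h0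
    rw [h0, zero_mul, add_zero, mul_eq_zero] at hrel2
    rcases hrel2 with h | h
    · exact haa h
    · exact hq h
  -- pair independences of the sides b'' and c''
  have hB0B : ∀ s t : ℝ, s • B0 + t • B = 0 → s = 0 ∧ t = 0 := by
    intro s t h
    rw [hB0e] at h
    have h' : (s * x) • A + t • B + (s * z) • C = 0 := by
      funext j; have hj := congrFun h j
      simp only [Pi.add_apply, Pi.smul_apply, smul_eq_mul, Pi.zero_apply] at hj ⊢
      linear_combination hj
    obtain ⟨hsx, ht, _⟩ := hind (s * x) t (s * z) h'
    refine ⟨?_, ht⟩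
    rcases mul_eq_zero.mp hsx with h | h
    · exact h
    · exact absurd h hx
  have hC0C : ∀ s t : ℝ, s • C0 + t • C = 0 → s = 0 ∧ t = 0 := by
    intro s t h
    rw [hC0e] at h
    have h' : (s * aa) • A + (s * bb) • B + t • C = 0 := by
      funext j; have hj := congrFun h j
      simp only [Pi.add_apply, Pi.smul_apply, smul_eq_mul, Pi.zero_apply] at hj ⊢
      linear_combination hj
    obtain ⟨hsa, _, ht⟩ := hind (s * aa) (s * bb) t h'
    refine ⟨?_, ht⟩
    rcases mul_eq_zero.mp hsa with h | h
    · exact h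
    · exact absurd h haa
  obtain ⟨u, v, hA''e1⟩ := coll_span B0 B A'' hB0B hA''1
  obtain ⟨u', v', hA''e2⟩ := coll_span C0 C A'' hC0C hA''2
  -- equate the two decompositions of A''
  have hkey : (u * x - u' * aa) • A + (v - u' * bb) • B + (u * z - v') • C = 0 := by
    funext j
    have h1 := congrFun hA''e1 j
    have h2 := congrFun hA''e2 j
    have hb := congrFun hB0e j
    have hcc := congrFun hC0e j
    simp only [Pi.add_apply, Pi.smul_apply, smul_eq_mul, Pi.zero_apply] at h1 h2 hb hcc ⊢
    linear_combination h2 - h1 + u' * hcc - u * hb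
  obtain ⟨e1, e2, e3⟩ := hind _ _ _ hkey
  have hux : u * x ≠ 0 := by
    intro h0
    have hu : u = 0 := by
      rcases mul_eq_zero.mp h0 with h | h
      · exact h
      · exact absurd h hx
    have hu' : u' = 0 := by
      have h' : u' * aa = 0 := by linear_combination -e1 + h0
      rcases mul_eq_zero.mp h' with h | h
      · exact h
      · exact absurd h haa
    have hv' : v' = 0 := by linear_combination -e3 + z * hu
    apply hA''0
    rw [hA''e2, hu', hv', zero_smul, zero_smul, add_zero]
  -- scalar relations
  have hpv : fM M B C * v + fM M C A * (u * x) = 0 := by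
    linear_combination fM M B C * e2 + fM M C A * e1 + u' * hrel2
  have hpz : fM M B C * (u * z) + fM M A B * (u * x) = 0 := by
    linear_combination u * hrel1
  -- N is on the line A A''
  have hNc : (u * x) • N = (2 * fM M B C * (u * x)) • A + (-fM M B C) • A'' := by
    funext j
    have hn := congrFun hN j
    have h1 := congrFun hA''e1 j
    have hb := congrFun hB0e j
    simp only [Pi.add_apply, Pi.smul_apply, Pi.neg_apply, smul_eq_mul,
      Pi.zero_apply] at hn h1 hb ⊢
    linear_combination (u * x) * hn + fM M B C * h1 + fM M B C * u * hb +
      B j * hpv + C j * hpz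
  refine ⟨cp A A'', cp_ne_zero A A'' hAne hAA'', dot3_cp_left A A'', dot3_cp_right A A'', ?_⟩
  have hd : dot3 (cp A A'') ((u * x) • N) = 0 := by
    rw [hNc, dot3_lin, dot3_cp_left, dot3_cp_right]
    ring
  rw [dot3_smul] at hd
  exact (mul_eq_zero.mp hd).resolve_left hux

/-- Concurrence of the pseudomedians: let `ABC` be a triangle in general position with
respect to a nondegenerate conic, `A0 = BC ∩ ρ(A)`, `B0 = CA ∩ ρ(B)`, `C0 = AB ∩ ρ(C)`,
and let the double triangle have sides `a'' = A0A`, `b'' = B0B`, `c'' = C0C` with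
vertices `A'' = b'' ∩ c''`, `B'' = c'' ∩ a''`, `C'' = a'' ∩ b''`.  Then the pseudomedians
`AA''`, `BB''`, `CC''` are concurrent. -/
theorem pseudomedians_concurrent (M : Matrix (Fin 3) (Fin 3) ℝ)
    (hsymm : M.IsSymm) (hdet : M.det ≠ 0)
    (A B C A0 B0 C0 A'' B'' C'' : Fin 3 → ℝ)
    (hABC : ¬Coll A B C)
    (hAc : dot3 A (M.mulVec A) ≠ 0) (hBc : dot3 B (M.mulVec B) ≠ 0)
    (hCc : dot3 C (M.mulVec C) ≠ 0)
    (hpolA : ¬(dot3 B (M.mulVec A) = 0 ∧ dot3 C (M.mulVec A) = 0))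
    (hpolB : ¬(dot3 C (M.mulVec B) = 0 ∧ dot3 A (M.mulVec B) = 0))
    (hpolC : ¬(dot3 A (M.mulVec C) = 0 ∧ dot3 B (M.mulVec C) = 0))
    (hA0 : A0 ≠ 0) (hA0a : Coll B C A0) (hA0b : dot3 A0 (M.mulVec A) = 0)
    (hB0 : B0 ≠ 0) (hB0a : Coll C A B0) (hB0b : dot3 B0 (M.mulVec B) = 0)
    (hC0 : C0 ≠ 0) (hC0a : Coll A B C0) (hC0b : dot3 C0 (M.mulVec C) = 0)
    (hA'' : A'' ≠ 0) (hA''1 : Coll B0 B A'') (hA''2 : Coll C0 C A'')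
    (hB'' : B'' ≠ 0) (hB''1 : Coll C0 C B'') (hB''2 : Coll A0 A B'')
    (hC'' : C'' ≠ 0) (hC''1 : Coll A0 A C'') (hC''2 : Coll B0 B C'')
    (hT'' : ¬Coll A'' B'' C'')
    (hAA'' : ∀ t : ℝ, A'' ≠ t • A) (hBB'' : ∀ t : ℝ, B'' ≠ t • B)
    (hCC'' : ∀ t : ℝ, C'' ≠ t • C) :
    ∃ N : Fin 3 → ℝ, N ≠ 0 ∧ Coll A A'' N ∧ Coll B B'' N ∧ Coll C C'' N := by
  have hind := indep3 A B C hABC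
  have hindB : ∀ x y z : ℝ, x • B + y • C + z • A = 0 → x = 0 ∧ y = 0 ∧ z = 0 := by
    intro x y z h
    have h' : z • A + x • B + y • C = 0 := by
      funext j; have hj := congrFun h j
      simp only [Pi.add_apply, Pi.smul_apply, smul_eq_mul, Pi.zero_apply] at hj ⊢
      linear_combination hj
    obtain ⟨hz, hx, hy⟩ := hind z x y h'
    exact ⟨hx, hy, hz⟩
  have hindC : ∀ x y z : ℝ, x • C + y • A + z • B = 0 → x = 0 ∧ y = 0 ∧ z = 0 := by
    intro x y z h
    have h' : y • A + z • B + x • C = 0 := by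
      funext j; have hj := congrFun h j
      simp only [Pi.add_apply, Pi.smul_apply, smul_eq_mul, Pi.zero_apply] at hj ⊢
      linear_combination hj
    obtain ⟨hy, hz, hx⟩ := hind y z x h'
    exact ⟨hx, hy, hz⟩
  have hTB : ¬Coll B'' C'' A'' := fun ⟨l, h0, h1, h2, h3⟩ => hT'' ⟨l, h0, h3, h1, h2⟩
  have hTC : ¬Coll C'' A'' B'' := fun ⟨l, h0, h1, h2, h3⟩ => hT'' ⟨l, h0, h2, h3, h1⟩
  have hp : fM M B C ≠ 0 :=
    p_nonzero M hsymm A B C B0 C0 A'' B'' C'' hind hpolB hpolC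
      hB0 hB0a hB0b hC0 hC0a hC0b hA''1 hB''1 hC''2 hT''
  have hq : fM M C A ≠ 0 :=
    p_nonzero M hsymm B C A C0 A0 B'' C'' A'' hindB hpolC hpolA
      hC0 hC0a hC0b hA0 hA0a hA0b hB''1 hC''1 hA''2 hTB
  have hr : fM M A B ≠ 0 :=
    p_nonzero M hsymm C A B A0 B0 C'' A'' B'' hindC hpolA hpolB
      hA0 hA0a hA0b hB0 hB0a hB0b hC''1 hA''1 hB''2 hTC
  refine ⟨fM M B C • A + fM M C A • B + fM M A B • C, ?_, ?_, ?_, ?_⟩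
  · intro h
    exact hp (hind _ _ _ h).1
  · exact vertex M hsymm A B C B0 C0 A'' _ hind hp hq hr hB0 hB0a hB0b
      hC0 hC0a hC0b hA'' hA''1 hA''2 hAA'' rfl
  · refine vertex M hsymm B C A C0 A0 B'' _ hindB hq hr hp hC0 hC0a hC0b
      hA0 hA0a hA0b hB'' hB''1 hB''2 hBB'' ?_
    funext j
    simp only [Pi.add_apply, Pi.smul_apply, smul_eq_mul]
    ring
  · refine vertex M hsymm C A B A0 B0 C'' _ hindC hr hp hq hA0 hA0a hA0b
      hB0 hB0a hB0b hC'' hC''1 hC''2 hCC'' ?_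
    funext j
    simp only [Pi.add_apply, Pi.smul_apply, smul_eq_mul]
    ring
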